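/- Let a : [0,π] × [0,2π] → ℝ be continuous. Then lim_{l→+∞} [∫₀^π ∫₀^{2π} a(θ,φ) (sin θ)^{2l+1} dφ dθ] / [2π ∫₀^π (sin θ)^{2l+1} dθ] = (1/2π) ∫₀^{2π} a(π/2, φ) dφ. -/

import Mathlib

open MeasureTheory Filter Topology

lemma sin_lt_one_of_ne {y : ℝ} (hy : y ∈ Set.Icc 0 Real.pi) (hne : y ≠ Real.pi / 2) :
    Real.sin y < 1 := by
  rcases lt_or_eq_of_le (Real.sin_le_one y) with h | h
  · exact h
  exfalso
  obtain ⟨k, hk⟩ := Real.sin_eq_one_iff.mp h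
  have hpi := Real.pi_pos
  obtain ⟨h0, h1⟩ := hy
  have hk1 : (k : ℝ) < 1 := by nlinarith
  have hk2 : (-1 : ℝ) < (k : ℝ) := by nlinarith
  have hk1' : k < 1 := by exact_mod_cast hk1
  have hk2' : (-1 : ℤ) < k := by exact_mod_cast hk2
  have hk0 : k = 0 := by omega
  subst hk0
  norm_num at hk
  exact hne hk.symm

/-- **Concentration of highest-weight spherical harmonics on the equator**: for every
continuous `a` on `[0,π] × [0,2π]`,
`(∫₀^π ∫₀^{2π} a(θ,φ) sin^{2l+1}θ dφ dθ) / (2π ∫₀^π sin^{2l+1}θ dθ)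
  → (1/2π) ∫₀^{2π} a(π/2, φ) dφ` as `l → ∞`. -/
theorem statement11 (a : ℝ × ℝ → ℝ)
    (ha : ContinuousOn a (Set.Icc 0 Real.pi ×ˢ Set.Icc 0 (2*Real.pi))) :
    Tendsto
      (fun l : ℕ =>
        (∫ θ in (0:ℝ)..Real.pi, ∫ φ in (0:ℝ)..(2*Real.pi),
            a (θ, φ) * (Real.sin θ) ^ (2*l+1)) /
          (2*Real.pi * ∫ θ in (0:ℝ)..Real.pi, (Real.sin θ) ^ (2*l+1)))
      atTop
      (𝓝 ((1/(2*Real.pi)) * ∫ φ in (0:ℝ)..(2*Real.pi), a (Real.pi/2, φ))) := by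
  have hpi := Real.pi_pos
  have h2pi : (0:ℝ) ≤ 2 * Real.pi := by linarith
  set s : Set (ℝ × ℝ) := Set.Icc 0 Real.pi ×ˢ Set.Icc 0 (2*Real.pi) with hs_def
  have hs_closed : IsClosed s := (isClosed_Icc).prod isClosed_Icc
  obtain ⟨b, hb⟩ := ContinuousMap.exists_restrict_eq hs_closed
    ⟨s.restrict a, ha.restrict⟩
  have hb_cont : Continuous b := b.continuous
  have hba : ∀ p ∈ s, b p = a p := by
    intro p hp
    have := congrFun (congrArg DFunLike.coe hb) ⟨p, hp⟩
    exact this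
  set g : ℝ → ℝ := fun θ => ∫ φ in (0:ℝ)..(2*Real.pi), b (θ, φ) with hg_def
  have hg_cont : Continuous g := by
    have : Continuous (Function.uncurry fun θ φ => b (θ, φ)) := by
      exact hb_cont
    exact intervalIntegral.continuous_parametric_intervalIntegral_of_continuous' this 0 (2*Real.pi)
  -- inner integral identity
  have hinner : ∀ (n : ℕ) (θ : ℝ), θ ∈ Set.Icc 0 Real.pi →
      (∫ φ in (0:ℝ)..(2*Real.pi), a (θ, φ) * (Real.sin θ) ^ n)
        = g θ * (Real.sin θ) ^ n := by
    intro n θ hθ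
    rw [hg_def]
    rw [← intervalIntegral.integral_mul_const]
    apply intervalIntegral.integral_congr
    intro φ hφ
    rw [Set.uIcc_of_le h2pi] at hφ
    show a (θ, φ) * Real.sin θ ^ n = b (θ, φ) * Real.sin θ ^ n
    rw [hba (θ, φ) (Set.mk_mem_prod hθ hφ)]
  -- rewrite numerator as set integral over Icc
  have hnum : ∀ n : ℕ,
      (∫ θ in (0:ℝ)..Real.pi, ∫ φ in (0:ℝ)..(2*Real.pi), a (θ, φ) * (Real.sin θ) ^ n)
        = ∫ θ in Set.Icc 0 Real.pi, (Real.sin θ) ^ n • g θ := by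
    intro n
    rw [intervalIntegral.integral_of_le hpi.le, ← integral_Icc_eq_integral_Ioc]
    apply setIntegral_congr_fun measurableSet_Icc
    intro θ hθ
    show (∫ φ in (0:ℝ)..(2*Real.pi), a (θ, φ) * (Real.sin θ) ^ n) = (Real.sin θ) ^ n • g θ
    rw [hinner n θ hθ, smul_eq_mul, mul_comm]
  have hden : ∀ n : ℕ,
      (∫ θ in (0:ℝ)..Real.pi, (Real.sin θ) ^ n)
        = ∫ θ in Set.Icc 0 Real.pi, (Real.sin θ) ^ n := by
    intro n
    rw [intervalIntegral.integral_of_le hpi.le, ← integral_Icc_eq_integral_Ioc]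
  -- the peak-function limit
  have hpeak : Tendsto (fun n : ℕ =>
      (∫ θ in Set.Icc 0 Real.pi, (Real.sin θ) ^ n)⁻¹ •
        ∫ θ in Set.Icc 0 Real.pi, (Real.sin θ) ^ n • g θ) atTop (𝓝 (g (Real.pi/2))) := by
    apply tendsto_setIntegral_pow_smul_of_unique_maximum_of_isCompact_of_continuousOn
      isCompact_Icc Real.continuous_sin.continuousOn
    · intro y hy hne
      rw [Real.sin_pi_div_two]
      exact sin_lt_one_of_ne hy hne
    · exact fun x hx => Real.sin_nonneg_of_nonneg_of_le_pi hx.1 hx.2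
    · rw [Real.sin_pi_div_two]; norm_num
    · rw [interior_Icc, closure_Ioo (by linarith : (0:ℝ) ≠ Real.pi)]
      constructor <;> linarith
    · exact hg_cont.continuousOn
  have hcomp : Tendsto (fun l : ℕ =>
      (∫ θ in Set.Icc 0 Real.pi, (Real.sin θ) ^ (2*l+1))⁻¹ •
        ∫ θ in Set.Icc 0 Real.pi, (Real.sin θ) ^ (2*l+1) • g θ) atTop (𝓝 (g (Real.pi/2))) :=
    hpeak.comp (tendsto_atTop_mono (fun l => by simp only [id_eq]; omega) tendsto_id)
  have hval : (∫ φ in (0:ℝ)..(2*Real.pi), a (Real.pi/2, φ)) = g (Real.pi/2) := by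
    rw [hg_def]
    apply intervalIntegral.integral_congr
    intro φ hφ
    rw [Set.uIcc_of_le h2pi] at hφ
    exact (hba (Real.pi/2, φ) (Set.mk_mem_prod ⟨by linarith, by linarith⟩ hφ)).symm
  rw [hval]
  have := hcomp.const_mul (1/(2*Real.pi))
  refine this.congr fun l => ?_
  rw [hnum (2*l+1), hden (2*l+1), smul_eq_mul]
  rw [div_eq_mul_inv, mul_inv]
  ring
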